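/- arXiv:1807.02619 — 2 statements merged into one kernel-verified Lean document; each statement's English description precedes it below -/
import Mathlib

section
/- Let H be an infinite-dimensional Hilbert space, M ∈ N, and δ ∈ (0,1). Suppose {u_i}_{i=1}^M ⊂ H is a Bessel sequence with Bessel bound 1 and either ‖u_i‖² ≥ δ for all i, or ‖u_i‖² ≤ δ for all i. Then for every sufficiently large K ∈ N there exist vectors φ_1,…,φ_K ∈ H with ‖φ_i‖² ≥ δ for all i (respectively ‖φ_i‖² ≤ δ for all i) such that {u_i}_{i=1}^M ∪ {φ_i}_{i=1}^K is a Parseval frame for its linear span. -/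
noncomputable section

/-- A family `u` is a Bessel sequence with bound `B`:
`∑_{i∈I} |⟨f, u i⟩|² ≤ B ‖f‖²` for all `f` (stated via finite partial sums). -/
def IsBessel {H : Type*} [NormedAddCommGroup H] [InnerProductSpace ℂ H]
    {ι : Type*} (u : ι → H) (B : ℝ) : Prop :=
  ∀ (f : H) (s : Finset ι), (∑ i ∈ s, ‖(inner ℂ (u i) f : ℂ)‖ ^ 2) ≤ B * ‖f‖ ^ 2

/-- The finite family `u ∪ φ` is a Parseval frame for its linear span. -/
def IsParsevalForSpan {H : Type*} [NormedAddCommGroup H] [InnerProductSpace ℂ H]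
    {M K : ℕ} (u : Fin M → H) (φ : Fin K → H) : Prop :=
  ∀ f ∈ Submodule.span ℂ (Set.range u ∪ Set.range φ),
    ((∑ i, ‖(inner ℂ (u i) f : ℂ)‖ ^ 2) + ∑ i, ‖(inner ℂ (φ i) f : ℂ)‖ ^ 2) = ‖f‖ ^ 2

set_option maxHeartbeats 1000000

open Finset Complex Submodule
open scoped ComplexConjugate

lemma norm_sq_sum_smul_orthonormal {H : Type*} [NormedAddCommGroup H] [InnerProductSpace ℂ H]
    {ι : Type*} [Fintype ι] {v : ι → H} (hv : Orthonormal ℂ v) (l : ι → ℂ) :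
    ‖∑ i, l i • v i‖ ^ 2 = ∑ i, ‖l i‖ ^ 2 := by
  have h := congrArg Complex.re (hv.inner_sum l l Finset.univ)
  rw [← RCLike.re_to_complex, inner_self_eq_norm_sq (𝕜 := ℂ)] at h
  rw [h, Complex.re_sum]
  congr 1; ext i
  rw [Complex.conj_mul', ← Complex.ofReal_pow, Complex.ofReal_re]

lemma exists_orthonormal_seq {H : Type*} [NormedAddCommGroup H] [InnerProductSpace ℂ H]
    (V : Submodule ℂ H) (hV : ¬ FiniteDimensional ℂ V) :
    ∃ e : ℕ → H, Orthonormal ℂ e ∧ ∀ n, e n ∈ V := by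
  have hinf : Infinite (Module.Basis.ofVectorSpaceIndex ℂ V) := by
    by_contra h
    rw [not_infinite_iff_finite] at h
    exact hV (Module.Finite.of_basis (Module.Basis.ofVectorSpace ℂ V))
  let emb := Infinite.natEmbedding (Module.Basis.ofVectorSpaceIndex ℂ V)
  let g : ℕ → V := fun n => Module.Basis.ofVectorSpace ℂ V (emb n)
  have hg : LinearIndependent ℂ g :=
    (Module.Basis.ofVectorSpace ℂ V).linearIndependent.comp emb emb.injective
  have he' : Orthonormal ℂ (InnerProductSpace.gramSchmidtNormed ℂ g) := InnerProductSpace.gramSchmidtNormed_orthonormal (𝕜 := ℂ) hg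
  refine ⟨fun n => ((InnerProductSpace.gramSchmidtNormed ℂ g n : V) : H), he'.comp_linearIsometry V.subtypeₗᵢ, ?_⟩
  intro n
  exact (InnerProductSpace.gramSchmidtNormed ℂ g n).2

lemma dft_parseval (K : ℕ) (w : Fin K → ℂ) :
    ∑ j : Fin K, Complex.normSq (∑ p : Fin K,
        Complex.exp (2 * Real.pi * Complex.I / K) ^ ((j : ℕ) * (p : ℕ)) * w p)
      = K * ∑ p : Fin K, Complex.normSq (w p) := by
  rcases Nat.eq_zero_or_pos K with hK | hK
  · subst hK; simp
  set ω := Complex.exp (2 * Real.pi * Complex.I / K) with hωdef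
  have hω : IsPrimitiveRoot ω K := Complex.isPrimitiveRoot_exp K hK.ne'
  have hωne : ω ≠ 0 := Complex.exp_ne_zero _
  have habs : ‖ω‖ = 1 := by
    have : (2 * (Real.pi : ℂ) * Complex.I / (K : ℂ)) = ((2 * Real.pi / K : ℝ) : ℂ) * Complex.I := by
      push_cast; ring
    rw [hωdef, this, Complex.norm_exp_ofReal_mul_I]
  have hconj : conj ω = ω⁻¹ := (Complex.inv_eq_conj habs).symm
  have key : ∀ p q : Fin K,
      ∑ j : Fin K, ω ^ ((j : ℕ) * (p : ℕ)) * conj (ω ^ ((j : ℕ) * (q : ℕ)))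
        = if p = q then (K : ℂ) else 0 := by
    intro p q
    set z : ℂ := ω ^ ((p : ℤ) - (q : ℤ)) with hz
    have hterm : ∀ j : Fin K,
        ω ^ ((j : ℕ) * (p : ℕ)) * conj (ω ^ ((j : ℕ) * (q : ℕ))) = z ^ (j : ℕ) := by
      intro j
      rw [map_pow, hconj, ← zpow_natCast ω, ← zpow_natCast (ω⁻¹), inv_zpow' ω, ← zpow_add₀ hωne]
      rw [hz, ← zpow_natCast (ω ^ _), ← zpow_mul]
      congr 1
      push_cast
      ring
    rw [Finset.sum_congr rfl fun j _ => hterm j]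
    by_cases hpq : p = q
    · subst hpq
      simp only [hz, sub_self, zpow_zero, if_pos rfl, one_pow]
      simp [Finset.card_univ]
    · rw [if_neg hpq]
      have hz1 : z ≠ 1 := by
        intro h
        have hd : (K : ℤ) ∣ (p : ℤ) - (q : ℤ) := (hω.zpow_eq_one_iff_dvd _).mp h
        have hlt : ((p : ℤ) - (q : ℤ)).natAbs < (K : ℤ).natAbs := by
          have := p.isLt; have := q.isLt; omega
        have := Int.eq_zero_of_dvd_of_natAbs_lt_natAbs hd hlt
        exact hpq (Fin.ext (by omega))
      have hzK : z ^ K = 1 := by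
        rw [hz, ← zpow_natCast (ω ^ _), ← zpow_mul, mul_comm, zpow_mul, zpow_natCast,
          hω.pow_eq_one, one_zpow]
      rw [Fin.sum_univ_eq_sum_range (fun j => z ^ j), geom_sum_eq hz1, hzK, sub_self, zero_div]
  have main : ∑ j : Fin K, ((∑ p : Fin K, ω ^ ((j : ℕ) * (p : ℕ)) * w p) *
      conj (∑ p : Fin K, ω ^ ((j : ℕ) * (p : ℕ)) * w p))
      = (K : ℂ) * ∑ p : Fin K, w p * conj (w p) := by
    have expand : ∀ j : Fin K, (∑ p : Fin K, ω ^ ((j : ℕ) * (p : ℕ)) * w p) *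
        conj (∑ p : Fin K, ω ^ ((j : ℕ) * (p : ℕ)) * w p)
        = ∑ p : Fin K, ∑ q : Fin K,
            (w p * conj (w q)) * (ω ^ ((j : ℕ) * (p : ℕ)) * conj (ω ^ ((j : ℕ) * (q : ℕ)))) := by
      intro j
      rw [map_sum, Finset.sum_mul_sum]
      refine Finset.sum_congr rfl fun p _ => Finset.sum_congr rfl fun q _ => ?_
      rw [map_mul]
      ring
    rw [Finset.sum_congr rfl fun j _ => expand j, Finset.sum_comm]
    have swap2 : ∀ p : Fin K, ∑ j : Fin K, ∑ q : Fin K,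
        (w p * conj (w q)) * (ω ^ ((j : ℕ) * (p : ℕ)) * conj (ω ^ ((j : ℕ) * (q : ℕ))))
        = ∑ q : Fin K, (w p * conj (w q)) *
            ∑ j : Fin K, ω ^ ((j : ℕ) * (p : ℕ)) * conj (ω ^ ((j : ℕ) * (q : ℕ))) := by
      intro p
      rw [Finset.sum_comm]
      exact Finset.sum_congr rfl fun q _ => by rw [Finset.mul_sum]
    rw [Finset.sum_congr rfl fun p _ => swap2 p]
    have collapse : ∀ p : Fin K, ∑ q : Fin K, (w p * conj (w q)) *
        ∑ j : Fin K, ω ^ ((j : ℕ) * (p : ℕ)) * conj (ω ^ ((j : ℕ) * (q : ℕ)))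
        = (w p * conj (w p)) * K := by
      intro p
      rw [Finset.sum_congr rfl fun q _ => by rw [key p q]]
      simp
    rw [Finset.sum_congr rfl fun p _ => collapse p, ← Finset.sum_mul]
    ring
  have main' : ∑ j : Fin K, ((Complex.normSq (∑ p : Fin K, ω ^ ((j : ℕ) * (p : ℕ)) * w p) : ℂ))
      = (K : ℂ) * ∑ p : Fin K, (Complex.normSq (w p) : ℂ) := by
    simpa only [Complex.mul_conj] using main
  have := congrArg Complex.re main'
  simpa [Complex.re_sum, Complex.ofReal_mul] using this

/-- a Bessel sequence with bound 1 whose norms² are all `≥ δ`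
(resp. all `≤ δ`) can be completed, by sufficiently many vectors with norms² `≥ δ`
(resp. `≤ δ`), to a Parseval frame for its linear span. -/
theorem completion_to_parseval_frame (H : Type) [NormedAddCommGroup H]
    [InnerProductSpace ℂ H] [CompleteSpace H] (hinf : ¬ FiniteDimensional ℂ H)
    (M : ℕ) (δ : ℝ) (hδ : δ ∈ Set.Ioo (0 : ℝ) 1)
    (u : Fin M → H) (hBessel : IsBessel u 1) :
    ((∀ i, δ ≤ ‖u i‖ ^ 2) →
      ∃ K₀ : ℕ, ∀ K, K₀ ≤ K →
        ∃ φ : Fin K → H, (∀ i, δ ≤ ‖φ i‖ ^ 2) ∧ IsParsevalForSpan u φ) ∧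
    ((∀ i, ‖u i‖ ^ 2 ≤ δ) →
      ∃ K₀ : ℕ, ∀ K, K₀ ≤ K →
        ∃ φ : Fin K → H, (∀ i, ‖φ i‖ ^ 2 ≤ δ) ∧ IsParsevalForSpan u φ) := by
  obtain ⟨hδ0, hδ1⟩ := hδ
  set W : Submodule ℂ H := Submodule.span ℂ (Set.range u) with hWdef
  haveI hWfd : FiniteDimensional ℂ W := FiniteDimensional.span_of_finite ℂ (Set.finite_range u)
  set u' : Fin M → W := fun i => ⟨u i, Submodule.subset_span (Set.mem_range_self i)⟩ with hu'def
  -- frame operator on W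
  set S : W →ₗ[ℂ] W :=
    { toFun := fun w => ∑ i, (inner ℂ (u' i) w : ℂ) • u' i
      map_add' := by
        intro x y
        simp [inner_add_right, add_smul, Finset.sum_add_distrib]
      map_smul' := by
        intro c x
        simp [inner_smul_right, smul_smul, Finset.smul_sum] } with hSdef
  set T : W →ₗ[ℂ] W := LinearMap.id - S with hTdef
  have hSapp : ∀ w : W, S w = ∑ i, (inner ℂ (u' i) w : ℂ) • u' i := fun w => rfl
  have hT : T.IsSymmetric := by
    intro x y
    have hS : (inner ℂ (S x) y : ℂ) = inner ℂ x (S y) := by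
      rw [hSapp, hSapp, sum_inner, inner_sum]
      refine Finset.sum_congr rfl fun i _ => ?_
      rw [inner_smul_left, inner_smul_right, ← inner_conj_symm x (u' i)]
      ring
    simp only [hTdef, LinearMap.sub_apply, LinearMap.id_apply, inner_sub_left, inner_sub_right, hS]
  have key1 : ∀ w : W, Complex.re (inner ℂ (T w) w : ℂ)
      = ‖(w : H)‖ ^ 2 - ∑ i, ‖(inner ℂ (u i) (w : H) : ℂ)‖ ^ 2 := by
    intro w
    have h1 : (inner ℂ (T w) w : ℂ) = inner ℂ (w : W) w - inner ℂ (S w) w := by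
      simp [hTdef, inner_sub_left]
    have h2 : (inner ℂ (S w) w : ℂ) = ∑ i, conj (inner ℂ (u' i) w : ℂ) * (inner ℂ (u' i) w : ℂ) := by
      rw [hSapp, sum_inner]
      exact Finset.sum_congr rfl fun i _ => by rw [inner_smul_left]
    have h3 : ∀ i : Fin M, (inner ℂ (u' i) w : ℂ) = (inner ℂ (u i) (w : H) : ℂ) := fun i => rfl
    rw [h1, h2]
    simp only [h3]
    rw [Complex.sub_re, Complex.re_sum]
    congr 1
    · have h4 := inner_self_eq_norm_sq (𝕜 := ℂ) (x := w)
      rw [RCLike.re_to_complex] at h4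
      rw [h4, Submodule.norm_coe]
    · refine Finset.sum_congr rfl fun i _ => ?_
      rw [Complex.conj_mul', ← Complex.ofReal_pow, Complex.ofReal_re]
  set d : ℕ := Module.finrank ℂ W with hd
  have hdrank : Module.finrank ℂ W = d := rfl
  set b : OrthonormalBasis (Fin d) ℂ W := hT.eigenvectorBasis hdrank with hbdef
  set lam : Fin d → ℝ := hT.eigenvalues hdrank with hlamdef
  have hTb : ∀ k, T (b k) = (lam k : ℂ) • b k := fun k => hT.apply_eigenvectorBasis hdrank k
  have hbnorm : ∀ k, ‖b k‖ = 1 := fun k => b.orthonormal.1 k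
  have hlam_eq : ∀ k, lam k = 1 - ∑ i, ‖(inner ℂ (u i) ((b k : W) : H) : ℂ)‖ ^ 2 := by
    intro k
    have h1 : Complex.re (inner ℂ (T (b k)) (b k) : ℂ) = lam k := by
      have hbk1 : (inner ℂ (b k) (b k) : ℂ) = 1 := by
        rw [inner_self_eq_norm_sq_to_K, hbnorm k]
        norm_num
      rw [hTb k, inner_smul_left, hbk1, mul_one, Complex.conj_ofReal, Complex.ofReal_re]
    have h2 := key1 (b k)
    rw [h1] at h2
    rw [h2, Submodule.norm_coe, hbnorm k]
    ring
  have hsum_le : ∀ k, ∑ i, ‖(inner ℂ (u i) ((b k : W) : H) : ℂ)‖ ^ 2 ≤ 1 := by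
    intro k
    have := hBessel ((b k : W) : H) Finset.univ
    rw [Submodule.norm_coe, hbnorm k] at this
    simpa using this
  have hlam_nonneg : ∀ k, 0 ≤ lam k := by
    intro k
    rw [hlam_eq k]
    have := hsum_le k
    linarith
  have hlam_le_one : ∀ k, lam k ≤ 1 := by
    intro k
    rw [hlam_eq k]
    have : (0:ℝ) ≤ ∑ i, ‖(inner ℂ (u i) ((b k : W) : H) : ℂ)‖ ^ 2 :=
      Finset.sum_nonneg fun i _ => sq_nonneg _
    linarith
  -- the key expansion identity on W
  have key2 : ∀ w : W, ∑ k, lam k * ‖(inner ℂ ((b k : W) : H) ((w : W) : H) : ℂ)‖ ^ 2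
      + ∑ i, ‖(inner ℂ (u i) ((w : W) : H) : ℂ)‖ ^ 2 = ‖((w : W) : H)‖ ^ 2 := by
    intro w
    have hexp : ∑ k, lam k * ‖(inner ℂ (b k) w : ℂ)‖ ^ 2 = Complex.re (inner ℂ (T w) w : ℂ) := by
      have hw := b.sum_repr' w
      have hTw : T w = ∑ k, ((inner ℂ (b k) w : ℂ) * (lam k : ℂ)) • b k := by
        conv_lhs => rw [← hw]
        rw [map_sum]
        refine Finset.sum_congr rfl fun k _ => ?_
        rw [map_smul, hTb k, smul_smul]
      rw [hTw, sum_inner, Complex.re_sum]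
      refine Finset.sum_congr rfl fun k _ => ?_
      symm
      rw [inner_smul_left, map_mul, Complex.conj_ofReal]
      have : (starRingEnd ℂ) (inner ℂ (b k) w : ℂ) * (inner ℂ (b k) w : ℂ)
          = ((‖(inner ℂ (b k) w : ℂ)‖ : ℂ)) ^ 2 := by
        rw [Complex.conj_mul']
      calc (((starRingEnd ℂ) (inner ℂ (b k) w : ℂ)) * (lam k : ℂ) * (inner ℂ (b k) w : ℂ)).re
          = ((lam k : ℂ) * (((starRingEnd ℂ) (inner ℂ (b k) w : ℂ)) * (inner ℂ (b k) w : ℂ))).re := by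
            ring_nf
        _ = lam k * ‖(inner ℂ (b k) w : ℂ)‖ ^ 2 := by
            rw [this, ← Complex.ofReal_pow, ← Complex.ofReal_mul, Complex.ofReal_re]
    simp only [Submodule.coe_inner] at hexp
    have k1 := key1 w
    simp only [Submodule.coe_inner] at k1
    rw [hexp, k1]
    ring
  -- infinite orthonormal sequence orthogonal to W
  have hWperp : ¬ FiniteDimensional ℂ (Wᗮ : Submodule ℂ H) := by
    intro hfin
    apply hinf
    have hsup : W ⊔ Wᗮ = ⊤ := Submodule.sup_orthogonal_of_hasOrthogonalProjection
    have htop : FiniteDimensional ℂ ↥(W ⊔ Wᗮ) := Submodule.finiteDimensional_sup W Wᗮ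
    rw [hsup] at htop
    exact (Submodule.topEquiv (R := ℂ) (M := H)).finiteDimensional
  have hbW : ∀ k : Fin d, ((b k : W) : H) ∈ W := fun k => (b k).2
  have hu'W : ∀ i, u i ∈ W := fun i => Submodule.subset_span (Set.mem_range_self i)
  constructor
  · intro _hu
    refine ⟨⌈(d:ℝ)/(1-δ)⌉₊, ?_⟩
    intro K hK
    have h1δ : (0:ℝ) < 1 - δ := by linarith
    have hKreal : (d:ℝ)/(1-δ) ≤ K := by
      refine le_trans (Nat.le_ceil _) ?_
      exact_mod_cast hK
    have hdK : (d:ℝ) ≤ (1-δ) * K := by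
      rw [div_le_iff₀ h1δ] at hKreal
      linarith
    have hdKnat : d ≤ K := by
      have h2 : (d:ℝ) ≤ (K:ℝ) := by nlinarith [Nat.cast_nonneg (α := ℝ) K]
      exact_mod_cast h2
    by_cases hK0 : K = 0
    · subst hK0
      refine ⟨Fin.elim0, fun i => i.elim0, ?_⟩
      intro f hf
      have hd0 : d = 0 := by omega
      have hWbot : W = ⊥ := Submodule.finrank_eq_zero.mp (by rw [hdrank, hd0])
      have hf0 : f = 0 := by
        have hle : Submodule.span ℂ (Set.range u ∪ Set.range (Fin.elim0 : Fin 0 → H))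
            ≤ (⊥ : Submodule ℂ H) := by
          rw [Submodule.span_le]
          rintro x (⟨i, rfl⟩ | ⟨j, rfl⟩)
          · have := hu'W i
            rw [hWbot] at this
            simpa using this
          · exact j.elim0
        simpa using hle hf
      simp [hf0]
    have hKpos : 0 < K := Nat.pos_of_ne_zero hK0
    set m : ℕ := K - d with hmdef
    have hdm : d + m = K := by omega
    have hmK : δ * K ≤ (m:ℝ) := by
      have hmr : (m:ℝ) = (K:ℝ) - (d:ℝ) := by
        push_cast [hmdef, Nat.cast_sub hdKnat]
        ring
      nlinarith
    obtain ⟨e, he_on, he_mem⟩ := exists_orthonormal_seq Wᗮ hWperp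
    set E : Fin m → H := fun l => e (l:ℕ) with hEdef
    have hE_on : Orthonormal ℂ E := he_on.comp (fun l : Fin m => (l:ℕ)) Fin.val_injective
    have hE_mem : ∀ l : Fin m, E l ∈ Wᗮ := fun l => he_mem l
    set ind : (Fin d ⊕ Fin m) ≃ Fin K := finSumFinEquiv.trans (finCongr hdm) with hinddef
    set o : Fin d ⊕ Fin m → H := Sum.elim (fun k => ((b k : W) : H)) E with hodef
    set a : Fin d ⊕ Fin m → ℝ := Sum.elim (fun k => Real.sqrt (lam k)) (fun _ => 1) with hadef
    set ω : ℂ := Complex.exp (2 * Real.pi * Complex.I / K) with hωdef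
    have habs : ‖ω‖ = 1 := by
      have hrepr : (2 * (Real.pi : ℂ) * Complex.I / (K : ℂ))
          = ((2 * Real.pi / K : ℝ) : ℂ) * Complex.I := by
        push_cast; ring
      rw [hωdef, hrepr, Complex.norm_exp_ofReal_mul_I]
    have hωnorm : ∀ t : ℕ, ‖ω ^ t‖ = 1 := by
      intro t
      rw [norm_pow, habs, one_pow]
    set l : Fin K → (Fin d ⊕ Fin m) → ℂ :=
      fun j p => (((Real.sqrt K)⁻¹ : ℝ) : ℂ) * ω ^ ((j:ℕ) * ((ind p : Fin K) : ℕ)) * (a p : ℂ)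
      with hldef
    set φ : Fin K → H := fun j => ∑ p, l j p • o p with hφdef
    have ho_on : Orthonormal ℂ o := by
      rw [orthonormal_iff_ite]
      rintro (k | s) (k' | s')
      · have := orthonormal_iff_ite.mp b.orthonormal k k'
        rw [Submodule.coe_inner] at this
        simpa [hodef] using this
      · simp only [hodef, Sum.elim_inl, Sum.elim_inr]
        rw [if_neg (by simp)]
        exact (Submodule.mem_orthogonal W (E s')).mp (hE_mem s') _ (hbW k)
      · simp only [hodef, Sum.elim_inl, Sum.elim_inr]
        rw [if_neg (by simp)]
        rw [← inner_conj_symm]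
        rw [(Submodule.mem_orthogonal W (E s)).mp (hE_mem s) _ (hbW k'), map_zero]
      · have := orthonormal_iff_ite.mp hE_on s s'
        simpa [hodef] using this
    have hnormsq : ∀ j : Fin K, ‖φ j‖ ^ 2 = (∑ k, lam k + m) / K := by
      intro j
      rw [hφdef]
      rw [norm_sq_sum_smul_orthonormal ho_on]
      have hterm : ∀ p, ‖l j p‖ ^ 2 = (K:ℝ)⁻¹ * (a p)^2 := by
        intro p
        rw [hldef]
        simp only []
        rw [norm_mul, norm_mul, hωnorm, mul_one, _root_.Complex.norm_real,
          _root_.Complex.norm_real, Real.norm_eq_abs, Real.norm_eq_abs,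
          _root_.abs_of_nonneg (by positivity : (0:ℝ) ≤ (Real.sqrt K)⁻¹), mul_pow, inv_pow,
          Real.sq_sqrt (by positivity : (0:ℝ) ≤ (K:ℝ)), _root_.sq_abs]
      rw [Finset.sum_congr rfl fun p _ => hterm p, ← Finset.mul_sum]
      rw [Fintype.sum_sum_type]
      have ha1 : ∀ k : Fin d, (a (Sum.inl k))^2 = lam k := by
        intro k
        simp only [hadef, Sum.elim_inl]
        exact Real.sq_sqrt (hlam_nonneg k)
      have ha2 : ∀ s : Fin m, (a (Sum.inr s))^2 = 1 := by
        intro s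
        simp [hadef]
      rw [Finset.sum_congr rfl fun k _ => ha1 k, Finset.sum_congr rfl fun s _ => ha2 s]
      simp only [Finset.sum_const, Finset.card_univ, Fintype.card_fin, nsmul_eq_mul, mul_one]
      field_simp
    refine ⟨φ, ?_, ?_⟩
    · intro j
      rw [hnormsq j]
      have hlamsum : (0:ℝ) ≤ ∑ k, lam k := Finset.sum_nonneg fun k _ => hlam_nonneg k
      rw [le_div_iff₀ (by positivity : (0:ℝ) < (K:ℝ))]
      calc δ * K ≤ (m:ℝ) := hmK
        _ ≤ ∑ k, lam k + m := by linarith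
    · intro f hf
      have hspan : Submodule.span ℂ (Set.range u ∪ Set.range φ)
          ≤ W ⊔ Submodule.span ℂ (Set.range E) := by
        rw [Submodule.span_le]
        rintro x (⟨i, rfl⟩ | ⟨j, rfl⟩)
        · exact Submodule.mem_sup_left (hu'W i)
        · rw [hφdef]
          refine Submodule.sum_mem _ fun p _ => Submodule.smul_mem _ _ ?_
          rcases p with k | s
          · exact Submodule.mem_sup_left (hbW k)
          · exact Submodule.mem_sup_right (Submodule.subset_span (Set.mem_range_self s))
      obtain ⟨w, hw, v, hv, rfl⟩ := Submodule.mem_sup.mp (hspan hf)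
      obtain ⟨c, hc⟩ := (mem_span_range_iff_exists_fun ℂ).mp hv
      have hvperp : v ∈ Wᗮ := by
        have : Submodule.span ℂ (Set.range E) ≤ Wᗮ := by
          rw [Submodule.span_le]
          rintro x ⟨s, rfl⟩
          exact hE_mem s
        exact this hv
      have horthWv : (inner ℂ w v : ℂ) = 0 := (Submodule.mem_orthogonal W v).mp hvperp w hw
      set wp : (Fin d ⊕ Fin m) → ℂ :=
        Sum.elim (fun k => (inner ℂ ((b k : W) : H) w : ℂ)) c with hwpdef
      have hof : ∀ p, (inner ℂ (o p) (w + v) : ℂ) = wp p := by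
        rintro (k | s)
        · simp only [hodef, hwpdef, Sum.elim_inl]
          rw [inner_add_right,
            (Submodule.mem_orthogonal W v).mp hvperp _ (hbW k), add_zero]
        · simp only [hodef, hwpdef, Sum.elim_inr]
          have h1 : (inner ℂ (E s) w : ℂ) = 0 := by
            rw [← inner_conj_symm,
              (Submodule.mem_orthogonal W (E s)).mp (hE_mem s) w hw, map_zero]
          have h2 : (inner ℂ (E s) v : ℂ) = c s := by
            rw [← hc, inner_sum]
            simp only [inner_smul_right, orthonormal_iff_ite.mp hE_on, mul_ite, mul_one,
              mul_zero]
            simp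
          rw [inner_add_right, h1, h2, zero_add]
      have hui : ∀ i : Fin M, (inner ℂ (u i) (w + v) : ℂ) = inner ℂ (u i) w := by
        intro i
        rw [inner_add_right,
          (Submodule.mem_orthogonal W v).mp hvperp _ (hu'W i), add_zero]
      set ww : Fin K → ℂ := fun q => conj ((a (ind.symm q) : ℂ) * wp (ind.symm q)) with hwwdef
      have hform : ∀ j : Fin K, (inner ℂ (φ j) (w + v) : ℂ)
          = (((Real.sqrt K)⁻¹ : ℝ) : ℂ)
            * conj (∑ q : Fin K, ω ^ ((j:ℕ) * (q:ℕ)) * ww q) := by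
        intro j
        rw [hφdef]
        simp only []
        rw [sum_inner, map_sum, Finset.mul_sum,
          ← Equiv.sum_comp ind (fun q => (((Real.sqrt K)⁻¹ : ℝ) : ℂ)
            * conj (ω ^ ((j:ℕ) * (q:ℕ)) * ww q))]
        refine Finset.sum_congr rfl fun p _ => ?_
        rw [inner_smul_left, hof p, hldef]
        simp only [hwwdef, Equiv.symm_apply_apply]
        rw [map_mul, map_mul, map_mul, Complex.conj_conj, Complex.conj_ofReal,
          Complex.conj_ofReal]
        ring
      have hsumφ : ∑ j : Fin K, ‖(inner ℂ (φ j) (w + v) : ℂ)‖ ^ 2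
          = ∑ q : Fin K, Complex.normSq (ww q) := by
        have hterm : ∀ j : Fin K, ‖(inner ℂ (φ j) (w + v) : ℂ)‖ ^ 2
            = (K:ℝ)⁻¹ * Complex.normSq (∑ q : Fin K, ω ^ ((j:ℕ) * (q:ℕ)) * ww q) := by
          intro j
          rw [hform j, norm_mul, _root_.Complex.norm_real, Real.norm_eq_abs,
            _root_.abs_of_nonneg (by positivity : (0:ℝ) ≤ (Real.sqrt K)⁻¹), mul_pow, inv_pow,
            Real.sq_sqrt (by positivity : (0:ℝ) ≤ (K:ℝ)), RCLike.norm_conj,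
            Complex.sq_norm]
        rw [Finset.sum_congr rfl fun j _ => hterm j, ← Finset.mul_sum, dft_parseval K ww,
          ← mul_assoc, inv_mul_cancel₀ (by positivity : ((K:ℝ)) ≠ 0), one_mul]
      have hwwsum : ∑ q : Fin K, Complex.normSq (ww q)
          = ∑ k, lam k * ‖(inner ℂ ((b k : W) : H) w : ℂ)‖ ^ 2 + ∑ s, ‖c s‖ ^ 2 := by
        rw [← Equiv.sum_comp ind (fun q => Complex.normSq (ww q)), Fintype.sum_sum_type]
        have h1 : ∀ k : Fin d, Complex.normSq (ww (ind (Sum.inl k)))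
            = lam k * ‖(inner ℂ ((b k : W) : H) w : ℂ)‖ ^ 2 := by
          intro k
          rw [hwwdef]
          simp only [Equiv.symm_apply_apply]
          rw [Complex.normSq_conj, Complex.normSq_mul, hadef, hwpdef]
          simp only [Sum.elim_inl]
          rw [Complex.normSq_ofReal, Complex.normSq_eq_norm_sq, Real.mul_self_sqrt (hlam_nonneg k)]
        have h2 : ∀ s : Fin m, Complex.normSq (ww (ind (Sum.inr s))) = ‖c s‖ ^ 2 := by
          intro s
          rw [hwwdef]
          simp only [Equiv.symm_apply_apply]
          rw [Complex.normSq_conj, Complex.normSq_mul, hadef, hwpdef]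
          simp only [Sum.elim_inr]
          rw [Complex.normSq_ofReal, Complex.normSq_eq_norm_sq]
          norm_num
        rw [Finset.sum_congr rfl fun k _ => h1 k, Finset.sum_congr rfl fun s _ => h2 s]
      have huf : (∑ i : Fin M, ‖(inner ℂ (u i) (w + v) : ℂ)‖ ^ 2)
          = ∑ i : Fin M, ‖(inner ℂ (u i) w : ℂ)‖ ^ 2 :=
        Finset.sum_congr rfl fun i _ => by rw [hui i]
      rw [huf, hsumφ, hwwsum]
      have hk2 := key2 ⟨w, hw⟩
      simp only [Submodule.coe_mk] at hk2
      have hnormv : ‖v‖ ^ 2 = ∑ s, ‖c s‖ ^ 2 := by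
        rw [← hc]
        exact norm_sq_sum_smul_orthonormal hE_on c
      have hnorm : ‖w + v‖ ^ 2 = ‖w‖ ^ 2 + ‖v‖ ^ 2 := by
        have h := norm_add_sq_eq_norm_sq_add_norm_sq_of_inner_eq_zero w v horthWv
        calc ‖w + v‖ ^ 2 = ‖w + v‖ * ‖w + v‖ := by ring
          _ = ‖w‖ * ‖w‖ + ‖v‖ * ‖v‖ := h
          _ = ‖w‖ ^ 2 + ‖v‖ ^ 2 := by ring
      rw [hnorm, hnormv]
      linarith [hk2]
  · intro _hu
    set n : ℕ := ⌈1/δ⌉₊ with hndef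
    have hn0 : 0 < n := Nat.ceil_pos.mpr (by positivity)
    have hnδ : 1 ≤ δ * n := by
      have h : (1:ℝ)/δ ≤ (n:ℝ) := Nat.le_ceil (1/δ)
      calc (1:ℝ) = δ * (1/δ) := by field_simp
        _ ≤ δ * n := by nlinarith
    refine ⟨d * n + n, ?_⟩
    intro K hK
    set r : ℕ := K - d * n with hrdef
    have hKr : d * n + r = K := by omega
    have hrn : n ≤ r := by omega
    have hr0 : 0 < r := by omega
    have hrδ : 1 ≤ δ * r := by
      have : (n:ℝ) ≤ (r:ℝ) := by exact_mod_cast hrn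
      nlinarith
    obtain ⟨e, he_on, he_mem⟩ := exists_orthonormal_seq Wᗮ hWperp
    set e0 : H := e 0 with he0def
    have he0n : ‖e0‖ = 1 := he_on.1 0
    have he0W : e0 ∈ Wᗮ := he_mem 0
    set ψ : (Fin d × Fin n) ⊕ Fin r → H :=
      Sum.elim (fun p => ((Real.sqrt (lam p.1 / n) : ℝ) : ℂ) • ((b p.1 : W) : H))
        (fun _ => (((Real.sqrt r)⁻¹ : ℝ) : ℂ) • e0) with hψdef
    set eqv : ((Fin d × Fin n) ⊕ Fin r) ≃ Fin K :=
      (Equiv.sumCongr finProdFinEquiv (Equiv.refl (Fin r))).trans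
        (finSumFinEquiv.trans (finCongr hKr)) with heqvdef
    refine ⟨fun j => ψ (eqv.symm j), ?_, ?_⟩
    · intro j
      rcases hs : eqv.symm j with p | l
      · simp only [hψdef, hs, Sum.elim_inl]
        rw [norm_smul]
        have h1 : ‖((Real.sqrt (lam p.1 / n) : ℝ) : ℂ)‖ = Real.sqrt (lam p.1 / n) := by
          rw [_root_.Complex.norm_real, Real.norm_eq_abs, _root_.abs_of_nonneg (Real.sqrt_nonneg _)]
        rw [h1, Submodule.norm_coe, hbnorm p.1, mul_one,
          Real.sq_sqrt (div_nonneg (hlam_nonneg p.1) (Nat.cast_nonneg n))]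
        rw [div_le_iff₀ (by positivity)]
        calc lam p.1 ≤ 1 := hlam_le_one p.1
          _ ≤ δ * n := hnδ
      · simp only [hψdef, hs, Sum.elim_inr]
        rw [norm_smul]
        have h1 : ‖(((Real.sqrt r)⁻¹ : ℝ) : ℂ)‖ = (Real.sqrt r)⁻¹ := by
          rw [_root_.Complex.norm_real, Real.norm_eq_abs, _root_.abs_of_nonneg (by positivity)]
        rw [h1, he0n, mul_one, inv_pow, Real.sq_sqrt (by positivity : (0:ℝ) ≤ (r:ℝ))]
        have hrpos : (0:ℝ) < r := by positivity
        calc (r:ℝ)⁻¹ = 1 * (r:ℝ)⁻¹ := (one_mul _).symm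
          _ ≤ δ * r * (r:ℝ)⁻¹ :=
              mul_le_mul_of_nonneg_right hrδ (le_of_lt (inv_pos.mpr hrpos))
          _ = δ := by field_simp
    · intro f hf
      have hspan : Submodule.span ℂ (Set.range u ∪ Set.range (fun j => ψ (eqv.symm j)))
          ≤ W ⊔ (ℂ ∙ e0) := by
        rw [Submodule.span_le]
        rintro x (⟨i, rfl⟩ | ⟨j, rfl⟩)
        · exact Submodule.mem_sup_left (hu'W i)
        · rcases hs : eqv.symm j with p | l
          · simp only [hψdef, hs, Sum.elim_inl]
            exact Submodule.mem_sup_left (W.smul_mem _ (hbW p.1))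
          · simp only [hψdef, hs, Sum.elim_inr]
            exact Submodule.mem_sup_right
              (Submodule.smul_mem _ _ (Submodule.mem_span_singleton_self e0))
      obtain ⟨w, hw, v, hv, rfl⟩ := Submodule.mem_sup.mp (hspan hf)
      obtain ⟨c, rfl⟩ := Submodule.mem_span_singleton.mp hv
      have horth : ∀ x ∈ W, (inner ℂ x e0 : ℂ) = 0 :=
        fun x hx => (Submodule.mem_orthogonal W e0).mp he0W x hx
      have horth' : ∀ x ∈ W, (inner ℂ e0 x : ℂ) = 0 := by
        intro x hx
        rw [← inner_conj_symm, horth x hx, map_zero]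
      have hui : ∀ i : Fin M, (inner ℂ (u i) (w + c • e0) : ℂ) = inner ℂ (u i) w := by
        intro i
        rw [inner_add_right, inner_smul_right, horth _ (hu'W i), mul_zero, add_zero]
      have hbk : ∀ k : Fin d, (inner ℂ ((b k : W) : H) (w + c • e0) : ℂ) = inner ℂ ((b k : W) : H) w := by
        intro k
        rw [inner_add_right, inner_smul_right, horth _ (hbW k), mul_zero, add_zero]
      have he0f : (inner ℂ e0 (w + c • e0) : ℂ) = c := by
        rw [inner_add_right, inner_smul_right, horth' w hw,
          inner_self_eq_norm_sq_to_K, he0n]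
        norm_num
      have hsum : (∑ j : Fin K, ‖(inner ℂ (ψ (eqv.symm j)) (w + c • e0) : ℂ)‖ ^ 2)
          = ∑ s, ‖(inner ℂ (ψ s) (w + c • e0) : ℂ)‖ ^ 2 :=
        Equiv.sum_comp eqv.symm (fun s => ‖(inner ℂ (ψ s) (w + c • e0) : ℂ)‖ ^ 2)
      rw [hsum, Fintype.sum_sum_type]
      have hpart1 : (∑ p : Fin d × Fin n, ‖(inner ℂ (ψ (Sum.inl p)) (w + c • e0) : ℂ)‖ ^ 2)
          = ∑ k : Fin d, lam k * ‖(inner ℂ ((b k : W) : H) w : ℂ)‖ ^ 2 := by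
        rw [Fintype.sum_prod_type]
        refine Finset.sum_congr rfl fun k _ => ?_
        have hterm : ∀ c' : Fin n, ‖(inner ℂ (ψ (Sum.inl (k, c'))) (w + c • e0) : ℂ)‖ ^ 2
            = lam k / n * ‖(inner ℂ ((b k : W) : H) w : ℂ)‖ ^ 2 := by
          intro c'
          simp only [hψdef, Sum.elim_inl]
          rw [inner_smul_left, Complex.conj_ofReal, norm_mul, _root_.Complex.norm_real, Real.norm_eq_abs,
            _root_.abs_of_nonneg (Real.sqrt_nonneg _), mul_pow,
            Real.sq_sqrt (div_nonneg (hlam_nonneg k) (Nat.cast_nonneg n)), hbk k]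
        rw [Finset.sum_congr rfl fun c' _ => hterm c']
        rw [Finset.sum_const, Finset.card_univ, Fintype.card_fin, nsmul_eq_mul]
        field_simp
      have hpart2 : (∑ l : Fin r, ‖(inner ℂ (ψ (Sum.inr l)) (w + c • e0) : ℂ)‖ ^ 2)
          = ‖c‖ ^ 2 := by
        have hterm : ∀ l : Fin r, ‖(inner ℂ (ψ (Sum.inr l)) (w + c • e0) : ℂ)‖ ^ 2
            = (r : ℝ)⁻¹ * ‖c‖ ^ 2 := by
          intro l
          simp only [hψdef, Sum.elim_inr]
          rw [inner_smul_left, Complex.conj_ofReal, norm_mul, _root_.Complex.norm_real, Real.norm_eq_abs,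
            _root_.abs_of_nonneg (by positivity : (0:ℝ) ≤ (Real.sqrt ↑r)⁻¹), mul_pow, inv_pow,
            Real.sq_sqrt (by positivity : (0:ℝ) ≤ (r:ℝ)), he0f]
        rw [Finset.sum_congr rfl fun l _ => hterm l]
        rw [Finset.sum_const, Finset.card_univ, Fintype.card_fin, nsmul_eq_mul]
        field_simp
      rw [hpart1, hpart2]
      have hk2 := key2 ⟨w, hw⟩
      simp only [Submodule.coe_mk] at hk2
      have huf : (∑ i : Fin M, ‖(inner ℂ (u i) (w + c • e0) : ℂ)‖ ^ 2)
          = ∑ i : Fin M, ‖(inner ℂ (u i) w : ℂ)‖ ^ 2 :=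
        Finset.sum_congr rfl fun i _ => by rw [hui i]
      rw [huf]
      have hnorm : ‖w + c • e0‖ ^ 2 = ‖w‖ ^ 2 + ‖c‖ ^ 2 := by
        have h0 : (inner ℂ w (c • e0) : ℂ) = 0 := by
          rw [inner_smul_right, horth w hw, mul_zero]
        have h := norm_add_sq_eq_norm_sq_add_norm_sq_of_inner_eq_zero w (c • e0) h0
        rw [norm_smul, he0n, mul_one] at h
        calc ‖w + c • e0‖ ^ 2 = ‖w + c • e0‖ * ‖w + c • e0‖ := by ring
          _ = ‖w‖ * ‖w‖ + ‖c‖ * ‖c‖ := h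
          _ = ‖w‖ ^ 2 + ‖c‖ ^ 2 := by ring
      rw [hnorm]
      linarith [hk2]
end
end

section
/- Given a measurable set S ⊂ T of positive measure, the following are equivalent: (i) there exist r ∈ N and a decomposition Z = ⋃_{j=1}^r Λ_j such that E(Λ_j) is a Riesz sequence in L²(S) for all j ∈ {1,…,r}; (ii) there exist d ∈ N and a syndetic set Λ ⊆ Z with γ(Λ) = d such that E(Λ) is a Riesz sequence in L²(S). -/
open MeasureTheory Real

noncomputable section

/-- The trigonometric polynomial `∑ a_n e^{inx}` with finitely supported coefficients. -/
def expSumZ (a : ℤ →₀ ℂ) (x : ℝ) : ℂ :=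
  ∑ n ∈ a.support, a n * Complex.exp (Complex.I * (n : ℂ) * (x : ℂ))

/-- The exponential system `E(Λ) = {e^{iλx}}_{λ∈Λ}` is a Riesz sequence in `L²(S)`,
where the torus `𝕋 = ℝ/2πℤ` is identified with `[0,2π)`. -/
def IsRieszExpZ (S : Set ℝ) (Λ : Set ℤ) : Prop :=
  ∃ A B : ℝ, 0 < A ∧ A ≤ B ∧
    ∀ a : ℤ →₀ ℂ, (↑a.support : Set ℤ) ⊆ Λ →
      ((A * ∑ n ∈ a.support, ‖a n‖ ^ 2) ≤ ∫ x in S, ‖expSumZ a x‖ ^ 2) ∧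
      ((∫ x in S, ‖expSumZ a x‖ ^ 2) ≤ B * ∑ n ∈ a.support, ‖a n‖ ^ 2)

/-- `Λ ⊆ ℤ` is syndetic with gaps between consecutive elements at most `d`. -/
def SyndeticWithGap (Λ : Set ℤ) (d : ℝ) : Prop :=
  (∀ n : ℤ, ∃ lam ∈ Λ, lam ≤ n) ∧
  (∀ lam ∈ Λ, ∃ mu ∈ Λ, lam < mu ∧ (mu : ℝ) ≤ (lam : ℝ) + d)

/-! ### Auxiliary lemmas -/

/-- The embedding `n ↦ n + t` of `ℤ` into itself. -/
def shiftEmb (t : ℤ) : ℤ ↪ ℤ := ⟨fun n => n + t, add_left_injective t⟩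

lemma expSumZ_shift (t : ℤ) (a : ℤ →₀ ℂ) (x : ℝ) :
    expSumZ (Finsupp.embDomain (shiftEmb t) a) x
      = Complex.exp (Complex.I * (t : ℂ) * (x : ℂ)) * expSumZ a x := by
  unfold expSumZ
  rw [Finsupp.support_embDomain, Finset.sum_map, Finset.mul_sum]
  refine Finset.sum_congr rfl fun m hm => ?_
  rw [Finsupp.embDomain_apply_self]
  have h2 : ((shiftEmb t m : ℤ) : ℂ) = (m : ℂ) + (t : ℂ) := by
    show ((m + t : ℤ) : ℂ) = _; push_cast; ring
  rw [h2, show Complex.I * ((m : ℂ) + (t : ℂ)) * (x : ℂ)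
      = Complex.I * (t:ℂ) * x + Complex.I * (m:ℂ) * x by ring, Complex.exp_add]
  ring

lemma norm_expSumZ_shift (t : ℤ) (a : ℤ →₀ ℂ) (x : ℝ) :
    ‖expSumZ (Finsupp.embDomain (shiftEmb t) a) x‖ = ‖expSumZ a x‖ := by
  rw [expSumZ_shift, norm_mul]
  have h1 : Complex.I * (t : ℂ) * (x : ℂ) = (((t : ℝ) * x : ℝ) : ℂ) * Complex.I := by
    push_cast; ring
  rw [h1, Complex.norm_exp_ofReal_mul_I, one_mul]

lemma sum_sq_shift (t : ℤ) (a : ℤ →₀ ℂ) :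
    ∑ n ∈ (Finsupp.embDomain (shiftEmb t) a).support,
        ‖(Finsupp.embDomain (shiftEmb t) a) n‖ ^ 2
      = ∑ n ∈ a.support, ‖a n‖ ^ 2 := by
  rw [Finsupp.support_embDomain, Finset.sum_map]
  exact Finset.sum_congr rfl fun m hm => by rw [Finsupp.embDomain_apply_self]

/-- If every finite subset of `Λ'` can be translated into `Λ` and `E(Λ)` is a Riesz
sequence in `L²(S)`, then so is `E(Λ')` (with the same constants). -/
lemma riesz_of_translates (S : Set ℝ) (Λ' Λ : Set ℤ) (h : IsRieszExpZ S Λ)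
    (htrans : ∀ a : ℤ →₀ ℂ, (↑a.support : Set ℤ) ⊆ Λ' →
      ∃ t : ℤ, ∀ k ∈ a.support, k + t ∈ Λ) :
    IsRieszExpZ S Λ' := by
  obtain ⟨A, B, hA, hAB, h⟩ := h
  refine ⟨A, B, hA, hAB, fun a ha => ?_⟩
  obtain ⟨t, ht⟩ := htrans a ha
  have hsub : (↑(Finsupp.embDomain (shiftEmb t) a).support : Set ℤ) ⊆ Λ := by
    rw [Finsupp.support_embDomain]
    intro n hn
    simp only [Finset.coe_map, Set.mem_image, Finset.mem_coe] at hn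
    obtain ⟨k, hk, rfl⟩ := hn
    exact ht k hk
  have key := h _ hsub
  have hInt : (∫ x in S, ‖expSumZ (Finsupp.embDomain (shiftEmb t) a) x‖ ^ 2)
      = ∫ x in S, ‖expSumZ a x‖ ^ 2 := by
    simp only [norm_expSumZ_shift]
  rwa [sum_sq_shift, hInt] at key

/-- Brown's lemma: if arbitrarily long intervals are covered by the sets `Λ j`, `j ∈ J`,
then some `Λ j` is piecewise syndetic (with some gap `d`, along arbitrarily long
intervals). -/
lemma brown {r : ℕ} (Λ : Fin r → Set ℤ) :
    ∀ J : Finset (Fin r),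
      (∀ N : ℕ, ∃ a : ℤ, ∀ k : ℤ, 0 ≤ k → k ≤ N → ∃ j ∈ J, a + k ∈ Λ j) →
      ∃ j ∈ J, ∃ d : ℕ, ∀ N : ℕ, ∃ a : ℤ, ∀ k : ℤ, 0 ≤ k → k ≤ N →
        ∃ m ∈ Λ j, a + k ≤ m ∧ m ≤ a + k + d := by
  intro J
  induction J using Finset.strongInduction with
  | _ J ih =>
    intro hcov
    obtain ⟨a0, h0⟩ := hcov 0
    obtain ⟨j, hjJ, -⟩ := h0 0 le_rfl (by norm_num)
    by_cases hps : ∃ d : ℕ, ∀ N : ℕ, ∃ a : ℤ, ∀ k : ℤ, 0 ≤ k → k ≤ N →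
        ∃ m ∈ Λ j, a + k ≤ m ∧ m ≤ a + k + d
    · exact ⟨j, hjJ, hps⟩
    · push_neg at hps
      have hcov' : ∀ N : ℕ, ∃ a : ℤ, ∀ k : ℤ, 0 ≤ k → k ≤ N →
          ∃ j' ∈ J.erase j, a + k ∈ Λ j' := by
        intro N
        obtain ⟨N', hN'⟩ := hps N
        obtain ⟨a, ha⟩ := hcov (N' + N)
        obtain ⟨k, hk0, hkN', hfree⟩ := hN' a
        refine ⟨a + k, fun k' hk0' hk'N => ?_⟩
        obtain ⟨j', hj'J, hj'mem⟩ := ha (k + k') (by linarith)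
          (by push_cast; linarith)
        rw [add_assoc]
        refine ⟨j', Finset.mem_erase.2 ⟨?_, hj'J⟩, hj'mem⟩
        rintro rfl
        have h1 := hfree (a + (k + k')) hj'mem (by linarith)
        linarith
      obtain ⟨j', hj', hd⟩ := ih (J.erase j) (Finset.erase_ssubset hjJ) hcov'
      exact ⟨j', Finset.mem_of_mem_erase hj', hd⟩

/-- Lawton, Paulsen: `ℤ` decomposes into finitely many sets whose
exponential systems are Riesz sequences in `L²(S)` iff there is a syndetic `Λ ⊆ ℤ` whose
exponential system is a Riesz sequence in `L²(S)`. -/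
theorem feichtinger_iff_syndetic (S : Set ℝ) (hS : S ⊆ Set.Ico 0 (2 * π))
    (hmeas : MeasurableSet S) (hpos : 0 < volume S) :
    (∃ r : ℕ, 0 < r ∧ ∃ Λ : Fin r → Set ℤ, (⋃ j, Λ j) = Set.univ ∧
      ∀ j, IsRieszExpZ S (Λ j)) ↔
    (∃ d : ℕ, 0 < d ∧ ∃ Λ : Set ℤ, SyndeticWithGap Λ d ∧ IsRieszExpZ S Λ) := by
  constructor
  · rintro ⟨r, hr, Λ, hcov, hRiesz⟩
    -- arbitrarily long intervals are covered by the colors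
    have hcovJ : ∀ N : ℕ, ∃ a : ℤ, ∀ k : ℤ, 0 ≤ k → k ≤ N →
        ∃ j ∈ (Finset.univ : Finset (Fin r)), a + k ∈ Λ j := by
      intro N
      refine ⟨0, fun k _ _ => ?_⟩
      have hmem : (0 + k : ℤ) ∈ ⋃ j, Λ j := by rw [hcov]; trivial
      obtain ⟨j, hj⟩ := Set.mem_iUnion.1 hmem
      exact ⟨j, Finset.mem_univ j, hj⟩
    obtain ⟨j, -, d, hPS⟩ := brown Λ Finset.univ hcovJ
    choose aa haa using fun N : ℕ => hPS (2 * N)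
    set c : ℕ → ℤ := fun N => aa N + N with hc
    set U : Ultrafilter ℕ := Ultrafilter.of Filter.atTop with hU
    set L : Set ℤ := {k : ℤ | {N : ℕ | c N + k ∈ Λ j} ∈ U} with hL
    -- L is d-dense in ℤ
    have hdense : ∀ k : ℤ, ∃ lam ∈ L, k ≤ lam ∧ lam ≤ k + d := by
      intro k
      have hsub : {N : ℕ | k.natAbs ≤ N} ⊆
          ⋃ i ∈ Set.Iic d, {N : ℕ | c N + (k + (i : ℤ)) ∈ Λ j} := by
        intro N hN
        simp only [Set.mem_setOf_eq] at hN
        have hN' : (k.natAbs : ℤ) ≤ N := by exact_mod_cast hN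
        have h1 : (0 : ℤ) ≤ k + N := by omega
        obtain ⟨m, hm, hm1, hm2⟩ := haa N (k + N) h1 (by push_cast; omega)
        refine Set.mem_iUnion₂.2 ⟨(m - (c N + k)).toNat, ?_, ?_⟩
        · simp only [Set.mem_Iic, hc]
          omega
        · simp only [Set.mem_setOf_eq, hc]
          have heq : c N + (k + ((m - (c N + k)).toNat : ℤ)) = m := by
            simp only [hc]; omega
          rw [show (aa N + ↑N + (k + ((m - (aa N + ↑N + k)).toNat : ℤ))) = m by omega]
          exact hm
      have hT : {N : ℕ | k.natAbs ≤ N} ∈ U :=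
        Ultrafilter.of_le Filter.atTop (Filter.mem_atTop _)
      have hUnion : (⋃ i ∈ Set.Iic d, {N : ℕ | c N + (k + (i : ℤ)) ∈ Λ j}) ∈ U :=
        Filter.mem_of_superset hT hsub
      obtain ⟨i, hid, hiU⟩ :=
        (Ultrafilter.finite_biUnion_mem_iff (Set.finite_Iic d)).1 hUnion
      refine ⟨k + (i : ℤ), hiU, by omega, ?_⟩
      have : (i : ℤ) ≤ d := by exact_mod_cast hid
      omega
    refine ⟨d + 1, Nat.succ_pos d, L, ?_, ?_⟩
    · constructor
      · intro n
        obtain ⟨lam, hlam, h1, h2⟩ := hdense (n - d)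
        exact ⟨lam, hlam, by omega⟩
      · intro lam hlam
        obtain ⟨mu, hmu, h1, h2⟩ := hdense (lam + 1)
        refine ⟨mu, hmu, by omega, ?_⟩
        have h3 : mu ≤ lam + ((d + 1 : ℕ) : ℤ) := by push_cast; omega
        exact_mod_cast h3
    · refine riesz_of_translates S L (Λ j) (hRiesz j) fun a ha => ?_
      have hmemU : (⋂ k ∈ a.support, {N : ℕ | c N + k ∈ Λ j}) ∈ U :=
        (Filter.biInter_finset_mem _).2 fun k hk => ha hk
      obtain ⟨N, hN⟩ := Filter.nonempty_of_mem hmemU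
      refine ⟨c N, fun k hk => ?_⟩
      have := Set.mem_iInter₂.1 hN k hk
      simpa [add_comm] using this
  · rintro ⟨d, hd, Λ, hsyn, hR⟩
    refine ⟨d, hd, fun j => {n : ℤ | n - (j : ℤ) ∈ Λ}, ?_, fun j => ?_⟩
    · ext n
      simp only [Set.mem_iUnion, Set.mem_univ, iff_true, Set.mem_setOf_eq]
      obtain ⟨lam0, hlam0, hle0⟩ := hsyn.1 n
      obtain ⟨lam, ⟨hlamΛ, hlamle⟩, hmax⟩ :=
        Int.exists_greatest_of_bdd (P := fun z => z ∈ Λ ∧ z ≤ n)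
          ⟨n, fun z hz => hz.2⟩ ⟨lam0, hlam0, hle0⟩
      obtain ⟨mu, hmuΛ, hlt, hmu⟩ := hsyn.2 lam hlamΛ
      have hmuZ : mu ≤ lam + (d : ℤ) := by exact_mod_cast hmu
      have hngt : n < mu := by
        by_contra hc
        push_neg at hc
        have := hmax mu ⟨hmuΛ, hc⟩
        omega
      refine ⟨⟨(n - lam).toNat, by omega⟩, ?_⟩
      show n - (((n - lam).toNat : ℕ) : ℤ) ∈ Λ
      rw [show n - (((n - lam).toNat : ℕ) : ℤ) = lam by omega]
      exact hlamΛ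
    · refine riesz_of_translates S _ Λ hR fun a ha => ⟨-(j : ℤ), fun k hk => ?_⟩
      have := ha hk
      simpa [sub_eq_add_neg] using this
end
end
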